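/- Let D be a triangulated category with a t-structure 𝒰 = (U^{≤0}, U^{≥0}), let m be a positive integer, and set m-ℋ = U^{≥-(m-1)} ∩ U^{≤0}. Then (m-ℋ[m] * m-ℋ * m-ℋ[-m]) ∩ (m-ℋ * m-ℋ[-m] * m-ℋ[-2m]) = m-ℋ * m-ℋ[-m]. -/

import Mathlib

open CategoryTheory Category Limits Pretriangulated

universe v u

variable (D : Type u) [Category.{v} D] [Preadditive D] [HasZeroObject D]
  [HasShift D ℤ] [∀ n : ℤ, (shiftFunctor D n).Additive]
  [Pretriangulated D] [HasBinaryBiproducts D]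

/-- `shiftSet D S n` is the full subcategory `S[n]`: objects isomorphic to `X⟦n⟧`
with `X ∈ S`. -/
def shiftSet (S : Set D) (n : ℤ) : Set D :=
  {A | ∃ B ∈ S, Nonempty (A ≅ B⟦n⟧)}

/-- `starSet D X Y` is `X * Y`: the class of objects `A` admitting a distinguished
triangle `X → A → Y → X[1]` with `X ∈ 𝒳` and `Y ∈ 𝒴`. -/
def starSet (X Y : Set D) : Set D :=
  {A | ∃ (B C : D) (f : B ⟶ A) (g : A ⟶ C) (h : C ⟶ B⟦(1 : ℤ)⟧),
    B ∈ X ∧ C ∈ Y ∧ Triangle.mk f g h ∈ distTriang D}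

/-- `Hom(X, Y) = 0`: every morphism from an object of `X` to an object of `Y` is zero. -/
def homZero (X Y : Set D) : Prop :=
  ∀ A ∈ X, ∀ B ∈ Y, ∀ f : A ⟶ B, f = 0

/-- a class of objects closed under isomorphisms -/
def isoClosed (S : Set D) : Prop :=
  ∀ ⦃A B : D⦄, (A ≅ B) → A ∈ S → B ∈ S

/-- an additive full subcategory (closed under isomorphisms) which is closed under
direct summands -/
structure AdditiveClosed (S : Set D) : Prop where
  iso : isoClosed D S
  zero : ∀ Z : D, IsZero Z → Z ∈ S
  sum : ∀ A ∈ S, ∀ B ∈ S, (A ⊞ B) ∈ S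
  summand : ∀ A ∈ S, ∀ (X : D) (i : X ⟶ A) (p : A ⟶ X), i ≫ p = 𝟙 X → X ∈ S

/-- a torsion pair `(U, V)` in the triangulated category `D` -/
structure IsTorsionPair (U V : Set D) : Prop where
  addU : AdditiveClosed D U
  addV : AdditiveClosed D V
  hom_zero : homZero D U V
  cover : ∀ A : D, A ∈ starSet D U V

/-- `t₁ ≼ t₂` for torsion pairs in a triangulated category: `U₁ ⊆ U₂` and `U₁[1] ⊆ U₂`. -/
def torsLE (U₁ U₂ : Set D) : Prop :=
  U₁ ⊆ U₂ ∧ shiftSet D U₁ 1 ⊆ U₂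

/-- a torsion pair `(T, F)` in an (extension-closed) full subcategory `H` of `D`:
`T` and `F` are additive subcategories of `H` closed under direct summands,
`Hom(T, F) = 0`, and every object of `H` admits a distinguished triangle
`T → X → F → T[1]` with `T ∈ 𝒯`, `F ∈ ℱ`. -/
structure IsTorsionPairIn (H T F : Set D) : Prop where
  subT : T ⊆ H
  subF : F ⊆ H
  isoT : ∀ ⦃A B : D⦄, (A ≅ B) → A ∈ T → B ∈ H → B ∈ T
  isoF : ∀ ⦃A B : D⦄, (A ≅ B) → A ∈ F → B ∈ H → B ∈ F
  zeroT : ∀ Z : D, IsZero Z → Z ∈ H → Z ∈ T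
  zeroF : ∀ Z : D, IsZero Z → Z ∈ H → Z ∈ F
  sumT : ∀ A ∈ T, ∀ B ∈ T, (A ⊞ B) ∈ T
  sumF : ∀ A ∈ F, ∀ B ∈ F, (A ⊞ B) ∈ F
  summandT : ∀ A ∈ T, ∀ (X : D) (i : X ⟶ A) (p : A ⟶ X), i ≫ p = 𝟙 X → X ∈ H → X ∈ T
  summandF : ∀ A ∈ F, ∀ (X : D) (i : X ⟶ A) (p : A ⟶ X), i ≫ p = 𝟙 X → X ∈ H → X ∈ F
  hom_zero : homZero D T F
  cover : ∀ A ∈ H, A ∈ starSet D T F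

/-- an `s`-torsion pair in `H`: a torsion pair with moreover `Hom(T, F[-1]) = 0`. -/
structure IsSTorsionPairIn (H T F : Set D) extends IsTorsionPairIn D H T F : Prop where
  neg_hom_zero : ∀ A ∈ T, ∀ B ∈ F, ∀ f : A ⟶ B⟦(-1 : ℤ)⟧, f = 0

/-- the relation `≼` for torsion pairs in a subcategory `H`:
`Hom(T, F') = 0` and `Hom(T, F'[-1]) = 0`. -/
def torsLEIn (T F' : Set D) : Prop :=
  homZero D T F' ∧ homZero D T (shiftSet D F' (-1))

/-- a `t`-structure `(L, G) = (S^{≤0}, S^{≥0})` on a triangulated (full) subcategory `S`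
of `D` (take `S = Set.univ` for a `t`-structure on `D` itself). -/
structure IsTStructureOn (S L G : Set D) : Prop where
  subL : L ⊆ S
  subG : G ⊆ S
  isoL : ∀ ⦃A B : D⦄, (A ≅ B) → A ∈ L → B ∈ S → B ∈ L
  isoG : ∀ ⦃A B : D⦄, (A ≅ B) → A ∈ G → B ∈ S → B ∈ G
  hom_zero : homZero D L (shiftSet D G (-1))
  cover : ∀ A ∈ S, A ∈ starSet D L (shiftSet D G (-1))
  shiftL : L ⊆ shiftSet D L (-1)
  shiftG : shiftSet D G (-1) ⊆ G

/-- a `t`-structure `(L, G) = (D^{≤0}, D^{≥0})` on `D`. -/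
def IsTStructure (L G : Set D) : Prop := IsTStructureOn D Set.univ L G

/-- a triangulated full subcategory of `D`. -/
structure IsTriangulatedSub (S : Set D) : Prop where
  iso : isoClosed D S
  zero : ∀ Z : D, IsZero Z → Z ∈ S
  shift : ∀ (n : ℤ), ∀ A ∈ S, A⟦n⟧ ∈ S
  ext₂ : ∀ (T : Triangle D), (T ∈ distTriang D) → T.obj₁ ∈ S → T.obj₃ ∈ S → T.obj₂ ∈ S

/-- an `m`-extended heart on `D`: a full subcategory of the form
`V^{≥ -(m-1)} ∩ V^{≤ 0}` for some `t`-structure `(V^{≤0}, V^{≥0})` on `D`. -/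
def IsExtendedHeart (m : ℤ) (E : Set D) : Prop :=
  ∃ L G : Set D, IsTStructure D L G ∧ E = shiftSet D G (m - 1) ∩ L

/-- the relation `E₁ ≤ E₂` for `m`-extended hearts:
`E₁ ⊆ E₂[m] * E₂` and `E₂ ⊆ E₁ * E₁[-m]`. -/
def extHeartLE (m : ℤ) (E₁ E₂ : Set D) : Prop :=
  E₁ ⊆ starSet D (shiftSet D E₂ m) E₂ ∧ E₂ ⊆ starSet D E₁ (shiftSet D E₁ (-m))


section Aux

set_option linter.unusedSectionVars false in
/-- `B⟦a⟧⟦b⟧ ≅ B⟦c⟧` when `a + b = c`. -/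
noncomputable def shIso {D : Type u} [Category.{v} D] [HasShift D ℤ]
    (B : D) (a b c : ℤ) (h : a + b = c) : (B⟦a⟧)⟦b⟧ ≅ B⟦c⟧ :=
  ((shiftFunctorAdd' D a b c h).symm.app B)

variable {D}

set_option linter.unusedSectionVars false

lemma shiftSet_isoClosed (S : Set D) (n : ℤ) : isoClosed D (shiftSet D S n) := by
  rintro A A' e ⟨B, hB, ⟨e'⟩⟩
  exact ⟨B, hB, ⟨e.symm ≪≫ e'⟩⟩

lemma mem_shiftSet_self {S : Set D} {A : D} (hA : A ∈ S) (n : ℤ) : A⟦n⟧ ∈ shiftSet D S n :=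
  ⟨A, hA, ⟨Iso.refl _⟩⟩

lemma shiftSet_mono {S T : Set D} (h : S ⊆ T) (n : ℤ) : shiftSet D S n ⊆ shiftSet D T n := by
  rintro A ⟨B, hB, e⟩; exact ⟨B, h hB, e⟩

lemma shiftSet_shiftSet (S : Set D) (a b c : ℤ) (h : a + b = c) :
    shiftSet D (shiftSet D S a) b = shiftSet D S c := by
  ext A
  constructor
  · rintro ⟨B', ⟨B, hB, ⟨e⟩⟩, ⟨e'⟩⟩
    exact ⟨B, hB, ⟨e' ≪≫ (shiftFunctor D b).mapIso e ≪≫ shIso B a b c h⟩⟩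
  · rintro ⟨B, hB, ⟨e⟩⟩
    exact ⟨B⟦a⟧, mem_shiftSet_self hB a, ⟨e ≪≫ (shIso B a b c h).symm⟩⟩

lemma shiftSet_zero {S : Set D} (hS : isoClosed D S) : shiftSet D S 0 = S := by
  ext A
  constructor
  · rintro ⟨B, hB, ⟨e⟩⟩
    exact hS (e ≪≫ (shiftFunctorZero D ℤ).app B).symm hB
  · intro hA
    exact ⟨A, hA, ⟨((shiftFunctorZero D ℤ).app A).symm⟩⟩

lemma shiftSet_shift {S : Set D} {A : D} {a : ℤ} (hA : A ∈ shiftSet D S a) (b c : ℤ)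
    (h : a + b = c) : A⟦b⟧ ∈ shiftSet D S c := by
  rw [← shiftSet_shiftSet S a b c h]; exact mem_shiftSet_self hA b

lemma shiftSet_inter {S T : Set D} (hT : isoClosed D T) (n : ℤ) :
    shiftSet D (S ∩ T) n = shiftSet D S n ∩ shiftSet D T n := by
  ext A
  constructor
  · rintro ⟨B, ⟨hB1, hB2⟩, ⟨e⟩⟩
    exact ⟨⟨B, hB1, ⟨e⟩⟩, ⟨B, hB2, ⟨e⟩⟩⟩
  · rintro ⟨⟨B, hB, ⟨e⟩⟩, ⟨C, hC, ⟨e'⟩⟩⟩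
    have eBC : B ≅ C := (shiftFunctor D n).preimageIso (e.symm ≪≫ e')
    exact ⟨B, ⟨hB, hT eBC.symm hC⟩, ⟨e⟩⟩

lemma starSet_isoClosed (X Y : Set D) : isoClosed D (starSet D X Y) := by
  rintro A A' e ⟨B, C, f, g, w, hB, hC, hT⟩
  refine ⟨B, C, f ≫ e.hom, e.inv ≫ g, w, hB, hC, ?_⟩
  refine isomorphic_distinguished _ hT _ ?_
  exact Triangle.isoMk _ _ (Iso.refl _) e.symm (Iso.refl _) (by simp [Triangle.mk]) (by simp [Triangle.mk]) (by simp [Triangle.mk])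

lemma mem_starSet_of {X Y : Set D} (T : Triangle D) (hT : T ∈ distTriang D)
    (h1 : T.obj₁ ∈ X) (h3 : T.obj₃ ∈ Y) : T.obj₂ ∈ starSet D X Y :=
  ⟨T.obj₁, T.obj₃, T.mor₁, T.mor₂, T.mor₃, h1, h3, hT⟩

section TS

variable {L G : Set D} (hU : IsTStructureOn D Set.univ L G)
include hU

lemma ts_L_isoClosed : isoClosed D L := fun A B e hA => hU.isoL e hA (Set.mem_univ B)

lemma ts_G_isoClosed : isoClosed D G := fun A B e hA => hU.isoG e hA (Set.mem_univ B)

lemma ts_Lsh_antitone {a b : ℤ} (h : b ≤ a) : shiftSet D L a ⊆ shiftSet D L b := by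
  have step : ∀ n : ℤ, shiftSet D L (n + 1) ⊆ shiftSet D L n := by
    intro n
    have := shiftSet_mono hU.shiftL (n + 1)
    rwa [shiftSet_shiftSet L (-1) (n + 1) n (by ring)] at this
  have key : ∀ k : ℕ, ∀ n : ℤ, shiftSet D L (n + k) ⊆ shiftSet D L n := by
    intro k
    induction k with
    | zero => intro n; simp
    | succ k ih =>
        intro n
        have e : n + ((k : ℤ) + 1) = (n + k) + 1 := by ring
        rw [Nat.cast_add, Nat.cast_one, e]
        exact (step (n + k)).trans (ih n)
  have ha : a = b + ((a - b).toNat : ℤ) := by omega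
  rw [ha]
  exact key _ b

lemma ts_Gsh_mono {a b : ℤ} (h : a ≤ b) : shiftSet D G a ⊆ shiftSet D G b := by
  have step : ∀ n : ℤ, shiftSet D G n ⊆ shiftSet D G (n + 1) := by
    intro n
    rw [← shiftSet_shiftSet G (-1) (n + 1) n (by ring)]
    exact shiftSet_mono hU.shiftG (n + 1)
  have key : ∀ k : ℕ, ∀ n : ℤ, shiftSet D G n ⊆ shiftSet D G (n + k) := by
    intro k
    induction k with
    | zero => intro n; simp
    | succ k ih =>
        intro n
        have e : n + ((k : ℤ) + 1) = (n + k) + 1 := by ring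
        rw [Nat.cast_add, Nat.cast_one, e]
        exact (ih n).trans (step (n + k))
  have hb : b = a + ((b - a).toNat : ℤ) := by omega
  rw [hb]
  exact key _ a

omit hU in
lemma homZero_shift {X Y : Set D} (h : homZero D X Y) (n : ℤ) :
    homZero D (shiftSet D X n) (shiftSet D Y n) := by
  rintro A ⟨A', hA', ⟨eA⟩⟩ B ⟨B', hB', ⟨eB⟩⟩ f
  have h0 : eA.inv ≫ f ≫ eB.hom = 0 := by
    obtain ⟨g, hg⟩ := (shiftFunctor D n).map_surjective (eA.inv ≫ f ≫ eB.hom)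
    rw [← hg, h A' hA' B' hB' g, Functor.map_zero]
  calc f = eA.hom ≫ (eA.inv ≫ f ≫ eB.hom) ≫ eB.inv := by simp
    _ = 0 := by rw [h0]; simp

lemma ts_homZero {a b : ℤ} (h : b < a) :
    homZero D (shiftSet D L a) (shiftSet D G b) := by
  have h1 := homZero_shift hU.hom_zero a
  rw [shiftSet_shiftSet G (-1) a (a - 1) (by ring)] at h1
  intro A hA B hB f
  exact h1 A hA B (ts_Gsh_mono hU (by omega) hB) f

lemma ts_homZero_L {b : ℤ} (h : b < 0) : homZero D L (shiftSet D G b) := by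
  rw [← shiftSet_zero (ts_L_isoClosed hU)]
  exact ts_homZero hU h

lemma ts_mem_L (A : D) (h : ∀ B ∈ shiftSet D G (-1), ∀ f : A ⟶ B, f = 0) : A ∈ L := by
  obtain ⟨X, Y, f, g, w, hX, hY, hT⟩ := hU.cover A (Set.mem_univ A)
  have hg : g = 0 := h Y hY g
  set T := Triangle.mk f g w with hTdef
  obtain ⟨r, hr⟩ := Triangle.yoneda_exact₂ T.rotate (rot_of_distTriang T hT) (𝟙 Y)
    (by simp [T, hg]; exact zero_comp)
  have hr0 : r = 0 :=
    ts_homZero hU (show (-1 : ℤ) < 1 by omega) (X⟦(1:ℤ)⟧) (mem_shiftSet_self hX 1) Y hY r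
  have hid : 𝟙 Y = 0 := by rw [hr, hr0]; exact comp_zero
  have hYzero : IsZero Y := by rwa [IsZero.iff_id_eq_zero]
  have : IsIso T.mor₁ := (Triangle.isZero₃_iff_isIso₁ T hT).1 hYzero
  exact hU.isoL (@asIso _ _ _ _ T.mor₁ this) hX (Set.mem_univ A)

lemma ts_mem_Gneg (A : D) (h : ∀ B ∈ L, ∀ f : B ⟶ A, f = 0) : A ∈ shiftSet D G (-1) := by
  obtain ⟨X, Y, f, g, w, hX, hY, hT⟩ := hU.cover A (Set.mem_univ A)
  have hf : f = 0 := h X hX f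
  set T := Triangle.mk f g w with hTdef
  obtain ⟨s, hs⟩ := Triangle.coyoneda_exact₂ T.invRotate (inv_rot_of_distTriang T hT) (𝟙 X)
    (by simp [T, hf]; exact comp_zero)
  have hs0 : s = 0 :=
    ts_homZero_L hU (show (-2 : ℤ) < 0 by omega) X hX (Y⟦(-1:ℤ)⟧)
      (shiftSet_shift hY (-1) (-2) (by ring)) s
  have hid : 𝟙 X = 0 := by rw [hs, hs0]; exact zero_comp
  have hXzero : IsZero X := by rwa [IsZero.iff_id_eq_zero]
  have : IsIso T.mor₂ := (Triangle.isZero₁_iff_isIso₂ T hT).1 hXzero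
  exact shiftSet_isoClosed G (-1) (@asIso _ _ _ _ T.mor₂ this : A ≅ Y).symm hY

lemma ts_ext_L (T : Triangle D) (hT : T ∈ distTriang D)
    (h1 : T.obj₁ ∈ L) (h3 : T.obj₃ ∈ L) : T.obj₂ ∈ L := by
  apply ts_mem_L hU
  intro B hB φ
  have h0 : T.mor₁ ≫ φ = 0 := ts_homZero_L hU (by omega) T.obj₁ h1 B hB _
  obtain ⟨ψ, hψ⟩ := Triangle.yoneda_exact₂ T hT φ h0
  rw [hψ, ts_homZero_L hU (by omega) T.obj₃ h3 B hB ψ, comp_zero]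

lemma ts_ext_Gneg (T : Triangle D) (hT : T ∈ distTriang D)
    (h1 : T.obj₁ ∈ shiftSet D G (-1)) (h3 : T.obj₃ ∈ shiftSet D G (-1)) :
    T.obj₂ ∈ shiftSet D G (-1) := by
  apply ts_mem_Gneg hU
  intro B hB φ
  have h0 : φ ≫ T.mor₂ = 0 := ts_homZero_L hU (by omega) B hB T.obj₃ h3 _
  obtain ⟨ψ, hψ⟩ := Triangle.coyoneda_exact₂ T hT φ h0
  rw [hψ, ts_homZero_L hU (by omega) B hB T.obj₁ h1 ψ, zero_comp]

omit hU in
lemma ext_shiftSet {S : Set D} (hS : isoClosed D S)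
    (hext : ∀ T : Triangle D, (T ∈ distTriang D) → T.obj₁ ∈ S → T.obj₃ ∈ S → T.obj₂ ∈ S)
    (n : ℤ) (T : Triangle D) (hT : T ∈ distTriang D)
    (h1 : T.obj₁ ∈ shiftSet D S n) (h3 : T.obj₃ ∈ shiftSet D S n) :
    T.obj₂ ∈ shiftSet D S n := by
  have hT' := Triangle.shift_distinguished T hT (-n)
  have h1' : T.obj₁⟦(-n : ℤ)⟧ ∈ S := by
    obtain ⟨B, hB, ⟨e⟩⟩ := h1
    exact hS ((shiftFunctor D (-n)).mapIso e ≪≫ shIso B n (-n) 0 (by ring) ≪≫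
      (shiftFunctorZero D ℤ).app B).symm hB
  have h3' : T.obj₃⟦(-n : ℤ)⟧ ∈ S := by
    obtain ⟨B, hB, ⟨e⟩⟩ := h3
    exact hS ((shiftFunctor D (-n)).mapIso e ≪≫ shIso B n (-n) 0 (by ring) ≪≫
      (shiftFunctorZero D ℤ).app B).symm hB
  have h2' : T.obj₂⟦(-n : ℤ)⟧ ∈ S :=
    hext ((CategoryTheory.shiftFunctor (Triangle D) (-n)).obj T) hT' h1' h3'
  exact ⟨T.obj₂⟦(-n : ℤ)⟧, h2', ⟨(shIso T.obj₂ (-n) n 0 (by ring) ≪≫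
    (shiftFunctorZero D ℤ).app T.obj₂).symm⟩⟩

lemma ts_ext_Lsh (n : ℤ) (T : Triangle D) (hT : T ∈ distTriang D)
    (h1 : T.obj₁ ∈ shiftSet D L n) (h3 : T.obj₃ ∈ shiftSet D L n) :
    T.obj₂ ∈ shiftSet D L n :=
  ext_shiftSet (ts_L_isoClosed hU) (ts_ext_L hU) n T hT h1 h3

lemma ts_ext_Gsh (n : ℤ) (T : Triangle D) (hT : T ∈ distTriang D)
    (h1 : T.obj₁ ∈ shiftSet D G n) (h3 : T.obj₃ ∈ shiftSet D G n) :
    T.obj₂ ∈ shiftSet D G n := by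
  rw [← shiftSet_shiftSet G (-1) (n + 1) n (by ring)] at h1 h3 ⊢
  exact ext_shiftSet (shiftSet_isoClosed G (-1)) (ts_ext_Gneg hU) (n + 1) T hT h1 h3

lemma ts_cover_shifted (b : ℤ) (A : D) :
    A ∈ starSet D (shiftSet D L b) (shiftSet D G (b - 1)) := by
  obtain ⟨X, Y, f, g, w, hX, hY, hT⟩ := hU.cover (A⟦(-b : ℤ)⟧) (Set.mem_univ _)
  set T := Triangle.mk f g w with hTdef
  have hT' := Triangle.shift_distinguished T hT b
  have hmem := mem_starSet_of (X := shiftSet D L b) (Y := shiftSet D G (b - 1))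
    ((CategoryTheory.shiftFunctor (Triangle D) b).obj T) hT'
    (mem_shiftSet_self hX b) (shiftSet_shift hY b (b - 1) (by ring))
  exact starSet_isoClosed _ _
    (shIso A (-b) b 0 (by ring) ≪≫ (shiftFunctorZero D ℤ).app A) hmem

lemma ts_star_eq (a b a' c : ℤ) (h1 : b ≤ a) (h2 : a' = b - 1) (h3 : c ≤ a') :
    starSet D (shiftSet D G a ∩ shiftSet D L b) (shiftSet D G a' ∩ shiftSet D L c) =
      shiftSet D G a ∩ shiftSet D L c := by
  subst h2
  ext A
  constructor
  · rintro ⟨B, C, f, g, w, ⟨hBG, hBL⟩, ⟨hCG, hCL⟩, hT⟩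
    constructor
    · exact ts_ext_Gsh hU a (Triangle.mk f g w) hT hBG (ts_Gsh_mono hU (by omega) hCG)
    · exact ts_ext_Lsh hU c (Triangle.mk f g w) hT (ts_Lsh_antitone hU (by omega) hBL) hCL
  · rintro ⟨hAG, hAL⟩
    obtain ⟨B, C, f, g, w, hBL, hCG, hT⟩ := ts_cover_shifted hU b A
    set T := Triangle.mk f g w with hTdef
    have hBG : B ∈ shiftSet D G a := by
      refine ts_ext_Gsh hU a T.invRotate (inv_rot_of_distTriang T hT) ?_ ?_
      · exact ts_Gsh_mono hU (show b - 2 ≤ a by omega)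
          (shiftSet_shift hCG (-1) (b - 2) (by ring))
      · exact hAG
    have hCL : C ∈ shiftSet D L c := by
      refine ts_ext_Lsh hU c T.rotate (rot_of_distTriang T hT) ?_ ?_
      · exact hAL
      · exact ts_Lsh_antitone hU (show c ≤ b + 1 by omega)
          (shiftSet_shift hBL 1 (b + 1) (by ring))
    exact mem_starSet_of T hT ⟨hBG, hBL⟩ ⟨hCG, hCL⟩

end TS

end Aux

/-- Lemma 4.3 (4):
`(m-ℋ[m] * m-ℋ * m-ℋ[-m]) ∩ (m-ℋ * m-ℋ[-m] * m-ℋ[-2m]) = m-ℋ * m-ℋ[-m]`. -/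
theorem stmt11 (L G : Set D) (hU : IsTStructure D L G) (m : ℤ) (hm : 1 ≤ m)
    (H : Set D) (hH : H = shiftSet D G (m - 1) ∩ L) :
    starSet D (shiftSet D H m) (starSet D H (shiftSet D H (-m))) ∩
      starSet D H (starSet D (shiftSet D H (-m)) (shiftSet D H (-(2 * m)))) =
    starSet D H (shiftSet D H (-m)) := by
  have hU' : IsTStructureOn D Set.univ L G := hU
  have hLiso := ts_L_isoClosed hU'
  have hH0 : H = shiftSet D G (m - 1) ∩ shiftSet D L 0 := by
    rw [hH, shiftSet_zero hLiso]
  have hHsh : ∀ n : ℤ, shiftSet D H n = shiftSet D G (m - 1 + n) ∩ shiftSet D L n := by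
    intro n
    rw [hH0, shiftSet_inter (shiftSet_isoClosed L 0) n,
      shiftSet_shiftSet G (m - 1) n (m - 1 + n) rfl, shiftSet_shiftSet L 0 n n (by ring)]
  rw [hHsh m, hHsh (-m), hHsh (-(2 * m)), hH0]
  rw [ts_star_eq hU' (m - 1) 0 (m - 1 + (-m)) (-m) (by omega) (by omega) (by omega)]
  rw [ts_star_eq hU' (m - 1 + m) m (m - 1) (-m) (by omega) (by omega) (by omega)]
  rw [ts_star_eq hU' (m - 1 + (-m)) (-m) (m - 1 + (-(2 * m))) (-(2 * m))
    (by omega) (by omega) (by omega)]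
  rw [ts_star_eq hU' (m - 1) 0 (m - 1 + (-m)) (-(2 * m)) (by omega) (by omega) (by omega)]
  ext A
  constructor
  · rintro ⟨⟨h1G, h1L⟩, ⟨h2G, h2L⟩⟩
    exact ⟨h2G, h1L⟩
  · rintro ⟨hG, hL⟩
    exact ⟨⟨ts_Gsh_mono hU' (by omega) hG, hL⟩,
      ⟨hG, ts_Lsh_antitone hU' (by omega) hL⟩⟩
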